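/- Let R₀ > 1, p > 0 and ȳ ∈ (0,1) satisfy exp(p·ȳ) = R₀·(1 − ȳ). Set α = −ȳ/(1 − ȳ), β = −p·ȳ, α₁ = −1/((1 − ȳ)·R₀·(1 + p(1 − ȳ))), β₁ = −p·(1 − ȳ)/(R₀·(1 + p(1 − ȳ))). Then β·α₁·(1 − 10α) + β₁·(10β² − α) = p·ȳ²·(11 − ȳ − 10p²·(1 − ȳ)³) / (R₀·(1 + p(1 − ȳ))·(1 − ȳ)²). Consequently this quantity vanishes if and only if 10·(1 − ȳ)³·p² = 11 − ȳ, i.e. if and only if p = (1/10)·√(10·(1 − ȳ)·(11 − ȳ))/(1 − ȳ)². -/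

import Mathlib

/-- For the exponential response with τ = 10, the tangency quantity
β·α₁·(1−10α) + β₁·(10β²−α) equals pȳ²(11−ȳ−10p²(1−ȳ)³)/(R₀(1+p(1−ȳ))(1−ȳ)²);
it vanishes iff 10(1−ȳ)³p² = 11−ȳ, i.e. iff p = (1/10)√(10(1−ȳ)(11−ȳ))/(1−ȳ)². -/
theorem stmt18 (R₀ p ybar : ℝ) (hR : 1 < R₀) (hp : 0 < p)
    (hy : ybar ∈ Set.Ioo (0 : ℝ) 1)
    (heq : Real.exp (p * ybar) = R₀ * (1 - ybar)) :
    let α : ℝ := -ybar / (1 - ybar)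
    let β : ℝ := -(p * ybar)
    let α₁ : ℝ := -1 / ((1 - ybar) * R₀ * (1 + p * (1 - ybar)))
    let β₁ : ℝ := -(p * (1 - ybar)) / (R₀ * (1 + p * (1 - ybar)))
    β * α₁ * (1 - 10 * α) + β₁ * (10 * β ^ 2 - α) =
      p * ybar ^ 2 * (11 - ybar - 10 * p ^ 2 * (1 - ybar) ^ 3) /
        (R₀ * (1 + p * (1 - ybar)) * (1 - ybar) ^ 2) ∧
    (β * α₁ * (1 - 10 * α) + β₁ * (10 * β ^ 2 - α) = 0 ↔
      10 * (1 - ybar) ^ 3 * p ^ 2 = 11 - ybar) ∧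
    (β * α₁ * (1 - 10 * α) + β₁ * (10 * β ^ 2 - α) = 0 ↔
      p = (1 / 10) * Real.sqrt (10 * (1 - ybar) * (11 - ybar)) / (1 - ybar) ^ 2) := by
  obtain ⟨hy0, hy1⟩ := hy
  have h1 : (0:ℝ) < 1 - ybar := by linarith
  have hR0 : (0:ℝ) < R₀ := by linarith
  have hden : (0:ℝ) < 1 + p * (1 - ybar) := by positivity
  have hmain : -(p * ybar) * (-1 / ((1 - ybar) * R₀ * (1 + p * (1 - ybar)))) *
      (1 - 10 * (-ybar / (1 - ybar))) +
      -(p * (1 - ybar)) / (R₀ * (1 + p * (1 - ybar))) *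
      (10 * (-(p * ybar)) ^ 2 - -ybar / (1 - ybar)) =
      p * ybar ^ 2 * (11 - ybar - 10 * p ^ 2 * (1 - ybar) ^ 3) /
        (R₀ * (1 + p * (1 - ybar)) * (1 - ybar) ^ 2) := by
    field_simp
    ring
  have hiff1 : p * ybar ^ 2 * (11 - ybar - 10 * p ^ 2 * (1 - ybar) ^ 3) /
        (R₀ * (1 + p * (1 - ybar)) * (1 - ybar) ^ 2) = 0 ↔
      10 * (1 - ybar) ^ 3 * p ^ 2 = 11 - ybar := by
    rw [div_eq_zero_iff]
    constructor
    · rintro (h | h)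
      · rcases mul_eq_zero.1 h with h' | h'
        · rcases mul_eq_zero.1 h' with h'' | h''
          · exact absurd h'' (ne_of_gt hp)
          · exact absurd h'' (by positivity)
        · linarith
      · exact absurd h (by positivity)
    · intro h
      left
      have : 11 - ybar - 10 * p ^ 2 * (1 - ybar) ^ 3 = 0 := by linarith [h]
      rw [this]; ring
  have hiff2 : 10 * (1 - ybar) ^ 3 * p ^ 2 = 11 - ybar ↔
      p = (1 / 10) * Real.sqrt (10 * (1 - ybar) * (11 - ybar)) / (1 - ybar) ^ 2 := by
    constructor
    · intro h
      have h11 : (0:ℝ) < 11 - ybar := by linarith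
      have hs : Real.sqrt (10 * (1 - ybar) * (11 - ybar)) =
          10 * p * (1 - ybar) ^ 2 := by
        rw [show 10 * (1 - ybar) * (11 - ybar) = (10 * p * (1 - ybar) ^ 2) ^ 2 by nlinarith]
        exact Real.sqrt_sq (by nlinarith [sq_nonneg (1 - ybar)])
      rw [hs]; field_simp
    · intro h
      have hnn : (0:ℝ) ≤ 10 * (1 - ybar) * (11 - ybar) := by nlinarith
      set s := Real.sqrt (10 * (1 - ybar) * (11 - ybar)) with hsdef
      have hs : s ^ 2 = 10 * (1 - ybar) * (11 - ybar) := Real.sq_sqrt hnn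
      have : p ^ 2 = (11 - ybar) / (10 * (1 - ybar) ^ 3) := by
        rw [h]; rw [div_pow, mul_pow, hs]
        field_simp
      rw [this]; field_simp
  refine ⟨hmain, ?_, ?_⟩
  · rw [hmain]; exact hiff1
  · rw [hmain]; exact hiff1.trans hiff2
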